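/- For integers n ≥ 3 and 2 ≤ k ≤ n, the function p ↦ T_p := ∫_{−∞}^{0} {1 + e^{−2η − 2p}[1 − e^{nη}]^{1/k}}^{−1/2} dη is well-defined (the integral converges for every p ∈ ℝ), continuous, and strictly increasing in p, with T_p → 0 as p → −∞ and T_p → ∞ as p → +∞. -/

import Mathlib

open Real MeasureTheory Filter
open Set

/-- The integrand `{1 + e^{−2η − 2p}[1 − e^{nη}]^{1/k}}^{−1/2}` for `η < 0`. -/
noncomputable def Tintegrand (n k : ℕ) (p η : ℝ) : ℝ :=
  (1 + Real.exp (-2 * η - 2 * p) * (1 - Real.exp ((n : ℝ) * η)) ^ ((1 : ℝ) / k))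
    ^ (-(1 : ℝ) / 2)

/-- `T_p = ∫_{−∞}^0 {1 + e^{−2η−2p}[1 − e^{nη}]^{1/k}}^{−1/2} dη`. -/
noncomputable def Tp (n k : ℕ) (p : ℝ) : ℝ :=
  ∫ η in Set.Iio (0 : ℝ), Tintegrand n k p η

namespace Stmt4aux

variable {n k : ℕ} {p q η : ℝ}

/-- the inner factor `g η = (1 - e^{nη})^{1/k}` -/
noncomputable def g (n k : ℕ) (η : ℝ) : ℝ := (1 - Real.exp ((n : ℝ) * η)) ^ ((1 : ℝ) / k)

lemma Tintegrand_eq : Tintegrand n k p η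
    = (1 + Real.exp (-2 * η - 2 * p) * g n k η) ^ (-(1 : ℝ) / 2) := rfl

lemma base_sub_pos (hn : 1 ≤ n) (hη : η < 0) : 0 < 1 - Real.exp ((n : ℝ) * η) := by
  have hn' : (0 : ℝ) < n := by exact_mod_cast Nat.lt_of_lt_of_le Nat.zero_lt_one hn
  have : (n : ℝ) * η < 0 := mul_neg_of_pos_of_neg hn' hη
  have := Real.exp_lt_one_iff.mpr this
  linarith

lemma g_pos (hn : 1 ≤ n) (hη : η < 0) : 0 < g n k η :=
  Real.rpow_pos_of_pos (base_sub_pos hn hη) _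

lemma g_le_one (hn : 1 ≤ n) (hη : η < 0) : g n k η ≤ 1 :=
  Real.rpow_le_one (base_sub_pos hn hη).le (by have := Real.exp_pos ((n:ℝ)*η); linarith)
    (by positivity)

lemma one_le_base (hn : 1 ≤ n) (hη : η < 0) :
    1 ≤ 1 + Real.exp (-2 * η - 2 * p) * g n k η := by
  have := (g_pos (k := k) hn hη)
  nlinarith [Real.exp_pos (-2 * η - 2 * p)]

lemma base_pos (hn : 1 ≤ n) (hη : η < 0) :
    0 < 1 + Real.exp (-2 * η - 2 * p) * g n k η :=
  lt_of_lt_of_le one_pos (one_le_base hn hη)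

lemma f_pos (hn : 1 ≤ n) (hη : η < 0) : 0 < Tintegrand n k p η :=
  Real.rpow_pos_of_pos (base_pos hn hη) _

lemma f_le_one (hn : 1 ≤ n) (hη : η < 0) : Tintegrand n k p η ≤ 1 :=
  Real.rpow_le_one_of_one_le_of_nonpos (one_le_base hn hη) (by norm_num)

lemma f_mono (hn : 1 ≤ n) (hη : η < 0) (hpq : p ≤ q) :
    Tintegrand n k p η ≤ Tintegrand n k q η := by
  rw [Tintegrand_eq, Tintegrand_eq]
  apply Real.rpow_le_rpow_of_nonpos (base_pos hn hη)
  · have hg := g_pos (k := k) hn hη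
    have : Real.exp (-2 * η - 2 * q) ≤ Real.exp (-2 * η - 2 * p) :=
      Real.exp_le_exp.mpr (by linarith)
    nlinarith
  · norm_num

lemma f_lt (hn : 1 ≤ n) (hη : η < 0) (hpq : p < q) :
    Tintegrand n k p η < Tintegrand n k q η := by
  rw [Tintegrand_eq, Tintegrand_eq]
  apply Real.rpow_lt_rpow_of_neg (base_pos hn hη)
  · have hg := g_pos (k := k) hn hη
    have : Real.exp (-2 * η - 2 * q) < Real.exp (-2 * η - 2 * p) :=
      Real.exp_lt_exp.mpr (by linarith)
    nlinarith
  · norm_num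

/-- constant for the dominating function -/
noncomputable def M (n k : ℕ) (p : ℝ) : ℝ :=
  max (Real.exp 1) (Real.exp p * ((1 - Real.exp (-(n : ℝ))) ^ ((1 : ℝ) / k)) ^ (-(1 : ℝ) / 2))

lemma f_bound (hn : 1 ≤ n) (hη : η < 0) :
    Tintegrand n k p η ≤ M n k p * Real.exp η := by
  have hn' : (0 : ℝ) < n := by exact_mod_cast Nat.lt_of_lt_of_le Nat.zero_lt_one hn
  rcases le_or_gt η (-1) with h1 | h1
  · -- η ≤ -1
    have hc0 : (0:ℝ) < 1 - Real.exp (-(n : ℝ)) := by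
      have : Real.exp (-(n:ℝ)) < 1 := Real.exp_lt_one_iff.mpr (by linarith)
      linarith
    have hcg : (1 - Real.exp (-(n : ℝ))) ^ ((1 : ℝ) / k) ≤ g n k η := by
      apply Real.rpow_le_rpow hc0.le _ (by positivity)
      have : (n:ℝ) * η ≤ -(n:ℝ) := by nlinarith
      have := Real.exp_le_exp.mpr this
      linarith
    have hcpos : (0:ℝ) < (1 - Real.exp (-(n : ℝ))) ^ ((1 : ℝ) / k) :=
      Real.rpow_pos_of_pos hc0 _
    have hgpos := g_pos (k := k) hn hη
    have step1 : Tintegrand n k p η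
        ≤ (Real.exp (-2 * η - 2 * p) * g n k η) ^ (-(1 : ℝ) / 2) := by
      rw [Tintegrand_eq]
      apply Real.rpow_le_rpow_of_nonpos (by positivity) (by linarith) (by norm_num)
    have step2 : (Real.exp (-2 * η - 2 * p) * g n k η) ^ (-(1 : ℝ) / 2)
        = Real.exp (η + p) * (g n k η) ^ (-(1 : ℝ) / 2) := by
      rw [Real.mul_rpow (Real.exp_nonneg _) hgpos.le, ← Real.exp_mul]
      ring_nf
    have step3 : (g n k η) ^ (-(1 : ℝ) / 2)
        ≤ ((1 - Real.exp (-(n : ℝ))) ^ ((1 : ℝ) / k)) ^ (-(1 : ℝ) / 2) :=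
      Real.rpow_le_rpow_of_nonpos hcpos hcg (by norm_num)
    have : Tintegrand n k p η ≤ Real.exp (η + p)
        * ((1 - Real.exp (-(n : ℝ))) ^ ((1 : ℝ) / k)) ^ (-(1 : ℝ) / 2) := by
      rw [step2] at step1
      calc Tintegrand n k p η ≤ _ := step1
        _ ≤ _ := by
          apply mul_le_mul_of_nonneg_left step3 (Real.exp_nonneg _)
    calc Tintegrand n k p η ≤ _ := this
      _ = (Real.exp p * ((1 - Real.exp (-(n : ℝ))) ^ ((1 : ℝ) / k)) ^ (-(1 : ℝ) / 2))
          * Real.exp η := by rw [Real.exp_add]; ring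
      _ ≤ M n k p * Real.exp η := by
          apply mul_le_mul_of_nonneg_right (le_max_right _ _) (Real.exp_nonneg _)
  · -- -1 < η < 0
    have : Tintegrand n k p η ≤ 1 := f_le_one hn hη
    have h2 : (1:ℝ) ≤ Real.exp 1 * Real.exp η := by
      rw [← Real.exp_add]
      have : (0:ℝ) ≤ 1 + η := by linarith
      calc (1:ℝ) = Real.exp 0 := (Real.exp_zero).symm
        _ ≤ _ := Real.exp_le_exp.mpr (by linarith)
    calc Tintegrand n k p η ≤ 1 := this
      _ ≤ Real.exp 1 * Real.exp η := h2
      _ ≤ M n k p * Real.exp η :=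
          mul_le_mul_of_nonneg_right (le_max_left _ _) (Real.exp_nonneg _)

lemma f_meas : Measurable (Tintegrand n k p) := by
  unfold Tintegrand
  fun_prop

lemma bound_integrable (C : ℝ) :
    IntegrableOn (fun η => C * Real.exp η) (Set.Iio (0:ℝ)) :=
  (((integrableOn_exp_Iic 0).mono_set Iio_subset_Iic_self)).const_mul C

lemma f_integrable (hn : 1 ≤ n) (p : ℝ) :
    IntegrableOn (Tintegrand n k p) (Set.Iio (0:ℝ)) := by
  apply Integrable.mono' (bound_integrable (M n k p)) f_meas.aestronglyMeasurable
  rw [ae_restrict_iff' measurableSet_Iio]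
  filter_upwards with η hη
  rw [Real.norm_eq_abs, abs_of_pos (f_pos hn hη)]
  exact f_bound hn hη


lemma Tp_cont (hn : 1 ≤ n) : Continuous (Tp n k) := by
  rw [continuous_iff_continuousAt]
  intro p0
  apply MeasureTheory.continuousAt_of_dominated
    (bound := fun η => M n k (p0 + 1) * Real.exp η)
  · exact Eventually.of_forall fun p => f_meas.aestronglyMeasurable
  · filter_upwards [eventually_le_nhds (lt_add_one p0)] with p hp
    rw [ae_restrict_iff' measurableSet_Iio]
    filter_upwards with η hη
    rw [Real.norm_eq_abs, abs_of_pos (f_pos hn hη)]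
    exact le_trans (f_mono hn hη hp) (f_bound hn hη)
  · exact bound_integrable _
  · rw [ae_restrict_iff' measurableSet_Iio]
    filter_upwards with η hη
    apply ContinuousAt.rpow_const
    · fun_prop
    · exact Or.inl (ne_of_gt (base_pos hn hη))

lemma Tp_smono (hn : 1 ≤ n) : StrictMono (Tp n k) := by
  intro p q hpq
  have hip := f_integrable (k := k) hn p
  have hiq := f_integrable (k := k) hn q
  have hpos : 0 < ∫ η in Set.Iio (0:ℝ), (Tintegrand n k q η - Tintegrand n k p η) := by
    rw [setIntegral_pos_iff_support_of_nonneg_ae]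
    · refine lt_of_lt_of_le ?_ (measure_mono
        (fun η (hη : η ∈ Set.Iio (0:ℝ)) =>
          ⟨ne_of_gt (sub_pos.2 (f_lt hn hη hpq)), hη⟩))
      simp [Real.volume_Iio]
    · refine (ae_restrict_iff' measurableSet_Iio).mpr ?_
      filter_upwards with η hη
      exact sub_nonneg.2 (f_mono hn hη hpq.le)
    · exact hiq.sub hip
  rw [integral_sub hiq hip] at hpos
  unfold Tp
  linarith

lemma Tp_atBot (hn : 1 ≤ n) : Tendsto (Tp n k) atBot (nhds 0) := by
  have h := MeasureTheory.tendsto_integral_filter_of_dominated_convergence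
    (μ := volume.restrict (Set.Iio (0:ℝ))) (l := atBot)
    (F := fun p η => Tintegrand n k p η) (f := fun _ => (0:ℝ))
    (bound := fun η => M n k 0 * Real.exp η)
    (Eventually.of_forall fun p => f_meas.aestronglyMeasurable)
    ?_ (bound_integrable _) ?_
  · have h' : Tp n k = fun p => ∫ η in Set.Iio (0:ℝ), Tintegrand n k p η := rfl
    rw [h']
    simpa using h
  · filter_upwards [eventually_le_atBot (0:ℝ)] with p hp
    rw [ae_restrict_iff' measurableSet_Iio]
    filter_upwards with η hη
    rw [Real.norm_eq_abs, abs_of_pos (f_pos hn hη)]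
    exact le_trans (f_mono hn hη hp) (f_bound hn hη)
  · rw [ae_restrict_iff' measurableSet_Iio]
    filter_upwards with η hη
    have hlin : Tendsto (fun p : ℝ => -2 * η - 2 * p) atBot atTop := by
      have h1 : Tendsto (fun p : ℝ => (-2 : ℝ) * p) atBot atTop :=
        tendsto_id.const_mul_atBot_of_neg (by norm_num)
      simpa [sub_eq_add_neg, neg_mul] using tendsto_atTop_add_const_left atBot (-2 * η) h1
    have hB : Tendsto (fun p : ℝ =>
        1 + Real.exp (-2 * η - 2 * p) * (1 - Real.exp ((n : ℝ) * η)) ^ ((1 : ℝ) / k))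
        atBot atTop := by
      apply tendsto_atTop_add_const_left
      exact Tendsto.atTop_mul_const (g_pos hn hη) (Real.tendsto_exp_atTop.comp hlin)
    have := (tendsto_rpow_neg_atTop (y := (1 : ℝ) / 2) (by norm_num)).comp hB
    simpa [Tintegrand, Function.comp_def, neg_div] using this


lemma Tp_atTop (hn : 1 ≤ n) : Tendsto (Tp n k) atTop atTop := by
  apply tendsto_atTop_atTop_of_monotone (Tp_smono hn).monotone
  intro b
  set A : ℝ := max 1 (2 * b) with hA
  have hA1 : (1:ℝ) ≤ A := le_max_left _ _
  have hA0 : (0:ℝ) < A := lt_of_lt_of_le one_pos hA1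
  refine ⟨A, ?_⟩
  have hsub : Set.Ico (-A) (0:ℝ) ⊆ Set.Iio 0 := fun x hx => hx.2
  have hlow : ∀ η ∈ Set.Ico (-A) (0:ℝ), (1/2 : ℝ) ≤ Tintegrand n k A η := by
    intro η hη
    have hη0 : η < 0 := hη.2
    have hB2 : 1 + Real.exp (-2 * η - 2 * A)
        * (1 - Real.exp ((n : ℝ) * η)) ^ ((1 : ℝ) / k) ≤ 2 := by
      show 1 + Real.exp (-2 * η - 2 * A) * g n k η ≤ 2
      have h1 : Real.exp (-2 * η - 2 * A) ≤ 1 := by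
        rw [Real.exp_le_one_iff]
        have := hη.1
        linarith
      have h2 := g_le_one (k := k) hn hη0
      have h3 := g_pos (k := k) hn hη0
      nlinarith
    have hstep : (2:ℝ) ^ (-(1:ℝ)/2) ≤ Tintegrand n k A η :=
      Real.rpow_le_rpow_of_nonpos (base_pos hn hη0) hB2 (by norm_num)
    refine le_trans ?_ hstep
    have h4 : (2:ℝ) ^ (-(1:ℝ)) ≤ (2:ℝ) ^ (-(1:ℝ)/2) :=
      Real.rpow_le_rpow_of_exponent_le one_le_two (by norm_num)
    rw [Real.rpow_neg_one] at h4
    norm_num at h4 ⊢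
    linarith
  have hmeas : volume (Set.Ico (-A) (0:ℝ)) = ENNReal.ofReal A := by
    rw [Real.volume_Ico]
    congr 1
    ring
  have h2 : (1/2:ℝ) * A ≤ ∫ η in Set.Ico (-A) (0:ℝ), Tintegrand n k A η := by
    have := setIntegral_ge_of_const_le (μ := volume) measurableSet_Ico
      (by rw [hmeas]; exact ENNReal.ofReal_ne_top) hlow
      ((f_integrable hn A).mono_set hsub)
    rw [measureReal_def, hmeas, ENNReal.toReal_ofReal hA0.le, smul_eq_mul] at this
    linarith
  have h3 : ∫ η in Set.Ico (-A) (0:ℝ), Tintegrand n k A η ≤ Tp n k A := by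
    apply setIntegral_mono_set (f_integrable hn A)
    · refine (ae_restrict_iff' measurableSet_Iio).mpr ?_
      filter_upwards with η hη
      exact (f_pos hn hη).le
    · exact HasSubset.Subset.eventuallyLE hsub
  have h5 : 2 * b ≤ A := le_max_right _ _
  linarith

end Stmt4aux

/-- for `n ≥ 3`, `2 ≤ k ≤ n`, the function `p ↦ T_p` is well defined (the integral
converges for every `p`), continuous, strictly increasing, with `T_p → 0` as `p → −∞` and
`T_p → ∞` as `p → +∞`. -/
theorem stmt4 (n k : ℕ) (hn : 3 ≤ n) (hk2 : 2 ≤ k) (hkn : k ≤ n) :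
    (∀ p : ℝ, IntegrableOn (Tintegrand n k p) (Set.Iio (0 : ℝ)))
    ∧ Continuous (Tp n k)
    ∧ StrictMono (Tp n k)
    ∧ Tendsto (Tp n k) atBot (nhds 0)
    ∧ Tendsto (Tp n k) atTop atTop := by
  have hn' : 1 ≤ n := le_trans (by norm_num) hn
  exact ⟨Stmt4aux.f_integrable hn', Stmt4aux.Tp_cont hn', Stmt4aux.Tp_smono hn',
    Stmt4aux.Tp_atBot hn', Stmt4aux.Tp_atTop hn'⟩
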